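/- Let α ∈ ℝ and consider the linear operators on C^∞(ℝ², ℝ) given by L₁f = x f_y − y f_x + α f, L₂f = (1 + x² − y²) f_x + 2xy f_y + 2αy f, and L₃f = 2xy f_x + (1 − x² + y²) f_y − 2αx f. If there exists a nonzero finite-dimensional subspace V of C^∞(ℝ², ℝ) with L_i(V) ⊆ V for i = 1, 2, 3, then α = 0. -/

import Mathlib

/-- partial derivative in `x` of a real-valued function on `ℝ²`. -/
noncomputable def pdx (f : ℝ × ℝ → ℝ) : ℝ × ℝ → ℝ := fun p => fderiv ℝ f p (1, 0)

/-- partial derivative in `y` of a real-valued function on `ℝ²`. -/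
noncomputable def pdy (f : ℝ × ℝ → ℝ) : ℝ × ℝ → ℝ := fun p => fderiv ℝ f p (0, 1)

open Real MeasureTheory Matrix
open LinearMap (BilinForm)

section Toolkit

variable {f g : ℝ × ℝ → ℝ} {p : ℝ × ℝ} {c : ℝ}

lemma contDiff_pdx (hf : ContDiff ℝ (⊤ : ℕ∞) f) : ContDiff ℝ (⊤ : ℕ∞) (pdx f) :=
  (hf.fderiv_right (le_refl _)).clm_apply contDiff_const

lemma contDiff_pdy (hf : ContDiff ℝ (⊤ : ℕ∞) f) : ContDiff ℝ (⊤ : ℕ∞) (pdy f) :=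
  (hf.fderiv_right (le_refl _)).clm_apply contDiff_const

lemma pdx_add (hf : DifferentiableAt ℝ f p) (hg : DifferentiableAt ℝ g p) :
    pdx (fun q => f q + g q) p = pdx f p + pdx g p := by
  simp [pdx, fderiv_fun_add hf hg]

lemma pdy_add (hf : DifferentiableAt ℝ f p) (hg : DifferentiableAt ℝ g p) :
    pdy (fun q => f q + g q) p = pdy f p + pdy g p := by
  simp [pdy, fderiv_fun_add hf hg]

lemma pdx_sub (hf : DifferentiableAt ℝ f p) (hg : DifferentiableAt ℝ g p) :
    pdx (fun q => f q - g q) p = pdx f p - pdx g p := by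
  simp [pdx, fderiv_fun_sub hf hg]

lemma pdy_sub (hf : DifferentiableAt ℝ f p) (hg : DifferentiableAt ℝ g p) :
    pdy (fun q => f q - g q) p = pdy f p - pdy g p := by
  simp [pdy, fderiv_fun_sub hf hg]

lemma pdx_mul (hf : DifferentiableAt ℝ f p) (hg : DifferentiableAt ℝ g p) :
    pdx (fun q => f q * g q) p = f p * pdx g p + g p * pdx f p := by
  simp [pdx, fderiv_fun_mul hf hg]

lemma pdy_mul (hf : DifferentiableAt ℝ f p) (hg : DifferentiableAt ℝ g p) :
    pdy (fun q => f q * g q) p = f p * pdy g p + g p * pdy f p := by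
  simp [pdy, fderiv_fun_mul hf hg]

lemma pdx_smul (hf : DifferentiableAt ℝ f p) :
    pdx (fun q => c * f q) p = c * pdx f p := by
  simp [pdx, fderiv_const_mul hf]

lemma pdy_smul (hf : DifferentiableAt ℝ f p) :
    pdy (fun q => c * f q) p = c * pdy f p := by
  simp [pdy, fderiv_const_mul hf]

lemma pdx_fst : pdx (fun q : ℝ × ℝ => q.1) p = 1 := by simp [pdx, fderiv_fst]
lemma pdx_snd : pdx (fun q : ℝ × ℝ => q.2) p = 0 := by simp [pdx, fderiv_snd]
lemma pdy_fst : pdy (fun q : ℝ × ℝ => q.1) p = 0 := by simp [pdy, fderiv_fst]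
lemma pdy_snd : pdy (fun q : ℝ × ℝ => q.2) p = 1 := by simp [pdy, fderiv_snd]
lemma pdx_const : pdx (fun _ : ℝ × ℝ => c) p = 0 := by simp [pdx]
lemma pdy_const : pdy (fun _ : ℝ × ℝ => c) p = 0 := by simp [pdy]

lemma pdx_pdy (hf : ContDiff ℝ (⊤ : ℕ∞) f) : pdx (pdy f) p = pdy (pdx f) p := by
  have hd : ContDiff ℝ (⊤ : ℕ∞) (fderiv ℝ f) := hf.fderiv_right (le_refl _)
  have hda : DifferentiableAt ℝ (fderiv ℝ f) p :=
    (hd.differentiable (by simp)) p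
  have hsymm : IsSymmSndFDerivAt ℝ f p := by
    apply ContDiffAt.isSymmSndFDerivAt (n := (⊤ : ℕ∞)) hf.contDiffAt
    simp only [minSmoothness_of_isRCLikeNormedField]; exact WithTop.coe_le_coe.mpr (le_top : ((2:ℕ∞) ≤ ⊤))
  have e1 : pdx (pdy f) p = fderiv ℝ (fderiv ℝ f) p (1, 0) (0, 1) := by
    have e : pdy f = fun q => (fderiv ℝ f q) ((0 : ℝ), (1 : ℝ)) := rfl
    rw [pdx, e, fderiv_clm_apply hda (differentiableAt_const _)]
    simp
  have e2 : pdy (pdx f) p = fderiv ℝ (fderiv ℝ f) p (0, 1) (1, 0) := by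
    have e : pdx f = fun q => (fderiv ℝ f q) ((1 : ℝ), (0 : ℝ)) := rfl
    rw [pdy, e, fderiv_clm_apply hda (differentiableAt_const _)]
    simp
  rw [e1, e2, hsymm.eq]

-- polynomial coefficients
lemma pdx_mul_fst (hf : DifferentiableAt ℝ f p) :
    pdx (fun q => f q * q.1) p = f p + p.1 * pdx f p := by
  have e : (fun q : ℝ × ℝ => f q * q.1)
      = fun q => f q * (fun q : ℝ × ℝ => q.1) q := rfl
  rw [e, pdx_mul hf (by fun_prop), pdx_fst]; ring

lemma pdx_mul_snd (hf : DifferentiableAt ℝ f p) :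
    pdx (fun q => f q * q.2) p = p.2 * pdx f p := by
  have e : (fun q : ℝ × ℝ => f q * q.2)
      = fun q => f q * (fun q : ℝ × ℝ => q.2) q := rfl
  rw [e, pdx_mul hf (by fun_prop), pdx_snd]; ring

lemma pdy_mul_fst (hf : DifferentiableAt ℝ f p) :
    pdy (fun q => f q * q.1) p = p.1 * pdy f p := by
  have e : (fun q : ℝ × ℝ => f q * q.1)
      = fun q => f q * (fun q : ℝ × ℝ => q.1) q := rfl
  rw [e, pdy_mul hf (by fun_prop), pdy_fst]; ring

lemma pdy_mul_snd (hf : DifferentiableAt ℝ f p) :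
    pdy (fun q => f q * q.2) p = f p + p.2 * pdy f p := by
  have e : (fun q : ℝ × ℝ => f q * q.2)
      = fun q => f q * (fun q : ℝ × ℝ => q.2) q := rfl
  rw [e, pdy_mul hf (by fun_prop), pdy_snd]; ring

lemma pdx_A : pdx (fun q : ℝ × ℝ => 1 + q.1 ^ 2 - q.2 ^ 2) p = 2 * p.1 := by
  have e : (fun q : ℝ × ℝ => 1 + q.1 ^ 2 - q.2 ^ 2)
      = fun q : ℝ × ℝ => (fun q : ℝ × ℝ => 1 + q.1 * q.1) q - (fun q : ℝ × ℝ => q.2 * q.2) q := by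
    funext q; ring
  rw [e, pdx_sub (by fun_prop) (by fun_prop)]
  have e2 : (fun q : ℝ × ℝ => 1 + q.1 * q.1)
      = fun q : ℝ × ℝ => (fun _ : ℝ × ℝ => (1:ℝ)) q + (fun q : ℝ × ℝ => q.1 * q.1) q := rfl
  rw [e2, pdx_add (by fun_prop) (by fun_prop), pdx_const,
    pdx_mul_fst (f := fun q : ℝ × ℝ => q.1) (by fun_prop),
    pdx_mul_snd (f := fun q : ℝ × ℝ => q.2) (by fun_prop), pdx_fst, pdx_snd]
  ring

lemma pdy_A : pdy (fun q : ℝ × ℝ => 1 + q.1 ^ 2 - q.2 ^ 2) p = -2 * p.2 := by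
  have e : (fun q : ℝ × ℝ => 1 + q.1 ^ 2 - q.2 ^ 2)
      = fun q : ℝ × ℝ => (fun q : ℝ × ℝ => 1 + q.1 * q.1) q - (fun q : ℝ × ℝ => q.2 * q.2) q := by
    funext q; ring
  rw [e, pdy_sub (by fun_prop) (by fun_prop)]
  have e2 : (fun q : ℝ × ℝ => 1 + q.1 * q.1)
      = fun q : ℝ × ℝ => (fun _ : ℝ × ℝ => (1:ℝ)) q + (fun q : ℝ × ℝ => q.1 * q.1) q := rfl
  rw [e2, pdy_add (by fun_prop) (by fun_prop), pdy_const,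
    pdy_mul_fst (f := fun q : ℝ × ℝ => q.1) (by fun_prop),
    pdy_mul_snd (f := fun q : ℝ × ℝ => q.2) (by fun_prop), pdy_fst, pdy_snd]
  ring

lemma pdx_C : pdx (fun q : ℝ × ℝ => 1 - q.1 ^ 2 + q.2 ^ 2) p = -2 * p.1 := by
  have e : (fun q : ℝ × ℝ => 1 - q.1 ^ 2 + q.2 ^ 2)
      = fun q : ℝ × ℝ => (fun q : ℝ × ℝ => 1 + q.2 * q.2) q - (fun q : ℝ × ℝ => q.1 * q.1) q := by
    funext q; ring
  rw [e, pdx_sub (by fun_prop) (by fun_prop)]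
  have e2 : (fun q : ℝ × ℝ => 1 + q.2 * q.2)
      = fun q : ℝ × ℝ => (fun _ : ℝ × ℝ => (1:ℝ)) q + (fun q : ℝ × ℝ => q.2 * q.2) q := rfl
  rw [e2, pdx_add (by fun_prop) (by fun_prop), pdx_const,
    pdx_mul_fst (f := fun q : ℝ × ℝ => q.1) (by fun_prop),
    pdx_mul_snd (f := fun q : ℝ × ℝ => q.2) (by fun_prop), pdx_fst, pdx_snd]
  ring

lemma pdy_C : pdy (fun q : ℝ × ℝ => 1 - q.1 ^ 2 + q.2 ^ 2) p = 2 * p.2 := by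
  have e : (fun q : ℝ × ℝ => 1 - q.1 ^ 2 + q.2 ^ 2)
      = fun q : ℝ × ℝ => (fun q : ℝ × ℝ => 1 + q.2 * q.2) q - (fun q : ℝ × ℝ => q.1 * q.1) q := by
    funext q; ring
  rw [e, pdy_sub (by fun_prop) (by fun_prop)]
  have e2 : (fun q : ℝ × ℝ => 1 + q.2 * q.2)
      = fun q : ℝ × ℝ => (fun _ : ℝ × ℝ => (1:ℝ)) q + (fun q : ℝ × ℝ => q.2 * q.2) q := rfl
  rw [e2, pdy_add (by fun_prop) (by fun_prop), pdy_const,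
    pdy_mul_fst (f := fun q : ℝ × ℝ => q.1) (by fun_prop),
    pdy_mul_snd (f := fun q : ℝ × ℝ => q.2) (by fun_prop), pdy_fst, pdy_snd]
  ring

lemma pdx_B : pdx (fun q : ℝ × ℝ => 2 * q.1 * q.2) p = 2 * p.2 := by
  have e : (fun q : ℝ × ℝ => 2 * q.1 * q.2)
      = fun q : ℝ × ℝ => (fun q : ℝ × ℝ => 2 * q.1) q * q.2 := rfl
  rw [e, pdx_mul_snd (by fun_prop)]
  have e2 : (fun q : ℝ × ℝ => 2 * q.1)
      = fun q : ℝ × ℝ => (fun _ : ℝ × ℝ => (2:ℝ)) q * q.1 := rfl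
  rw [e2, pdx_mul_fst (by fun_prop), pdx_const]
  ring

lemma pdy_B : pdy (fun q : ℝ × ℝ => 2 * q.1 * q.2) p = 2 * p.1 := by
  have e : (fun q : ℝ × ℝ => 2 * q.1 * q.2)
      = fun q : ℝ × ℝ => (fun q : ℝ × ℝ => 2 * q.1) q * q.2 := rfl
  rw [e, pdy_mul_snd (by fun_prop)]
  have e2 : (fun q : ℝ × ℝ => 2 * q.1)
      = fun q : ℝ × ℝ => (fun _ : ℝ × ℝ => (2:ℝ)) q * q.1 := rfl
  rw [e2, pdy_mul_fst (by fun_prop), pdy_const]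
  ring

lemma pdx_M (α : ℝ) : pdx (fun q : ℝ × ℝ => 2 * α * q.2) p = 0 := by
  have e : (fun q : ℝ × ℝ => 2 * α * q.2)
      = fun q : ℝ × ℝ => (fun _ : ℝ × ℝ => 2 * α) q * q.2 := rfl
  rw [e, pdx_mul_snd (by fun_prop), pdx_const]; ring

lemma pdy_M (α : ℝ) : pdy (fun q : ℝ × ℝ => 2 * α * q.2) p = 2 * α := by
  have e : (fun q : ℝ × ℝ => 2 * α * q.2)
      = fun q : ℝ × ℝ => (fun _ : ℝ × ℝ => 2 * α) q * q.2 := rfl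
  rw [e, pdy_mul_snd (by fun_prop), pdy_const]; ring

lemma pdx_N (α : ℝ) : pdx (fun q : ℝ × ℝ => 2 * α * q.1) p = 2 * α := by
  have e : (fun q : ℝ × ℝ => 2 * α * q.1)
      = fun q : ℝ × ℝ => (fun _ : ℝ × ℝ => 2 * α) q * q.1 := rfl
  rw [e, pdx_mul_fst (by fun_prop), pdx_const]; ring

lemma pdy_N (α : ℝ) : pdy (fun q : ℝ × ℝ => 2 * α * q.1) p = 0 := by
  have e : (fun q : ℝ × ℝ => 2 * α * q.1)
      = fun q : ℝ × ℝ => (fun _ : ℝ × ℝ => 2 * α) q * q.1 := rfl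
  rw [e, pdy_mul_fst (by fun_prop), pdy_const]; ring

end Toolkit


variable {f g : ℝ × ℝ → ℝ} {p : ℝ × ℝ} {c : ℝ}

section Ops
variable {f u v w a b m : ℝ × ℝ → ℝ} {p : ℝ × ℝ}

lemma pdx_sum3 (ha : DifferentiableAt ℝ a p) (hu : DifferentiableAt ℝ u p)
    (hb : DifferentiableAt ℝ b p) (hv : DifferentiableAt ℝ v p)
    (hm : DifferentiableAt ℝ m p) (hw : DifferentiableAt ℝ w p) :
    pdx (fun q => a q * u q + b q * v q + m q * w q) p
      = (a p * pdx u p + u p * pdx a p) + (b p * pdx v p + v p * pdx b p)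
        + (m p * pdx w p + w p * pdx m p) := by
  have e : (fun q => a q * u q + b q * v q + m q * w q)
      = fun q => ((fun q => a q * u q) q + (fun q => b q * v q) q) + (fun q => m q * w q) q := rfl
  rw [e, pdx_add (by fun_prop) (by fun_prop), pdx_add (by fun_prop) (by fun_prop),
    pdx_mul ha hu, pdx_mul hb hv, pdx_mul hm hw]

lemma pdx_sum3' (ha : DifferentiableAt ℝ a p) (hu : DifferentiableAt ℝ u p)
    (hb : DifferentiableAt ℝ b p) (hv : DifferentiableAt ℝ v p)
    (hm : DifferentiableAt ℝ m p) (hw : DifferentiableAt ℝ w p) :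
    pdx (fun q => a q * u q + b q * v q - m q * w q) p
      = (a p * pdx u p + u p * pdx a p) + (b p * pdx v p + v p * pdx b p)
        - (m p * pdx w p + w p * pdx m p) := by
  have e : (fun q => a q * u q + b q * v q - m q * w q)
      = fun q => ((fun q => a q * u q) q + (fun q => b q * v q) q) - (fun q => m q * w q) q := rfl
  rw [e, pdx_sub (by fun_prop) (by fun_prop), pdx_add (by fun_prop) (by fun_prop),
    pdx_mul ha hu, pdx_mul hb hv, pdx_mul hm hw]

lemma pdy_sum3 (ha : DifferentiableAt ℝ a p) (hu : DifferentiableAt ℝ u p)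
    (hb : DifferentiableAt ℝ b p) (hv : DifferentiableAt ℝ v p)
    (hm : DifferentiableAt ℝ m p) (hw : DifferentiableAt ℝ w p) :
    pdy (fun q => a q * u q + b q * v q + m q * w q) p
      = (a p * pdy u p + u p * pdy a p) + (b p * pdy v p + v p * pdy b p)
        + (m p * pdy w p + w p * pdy m p) := by
  have e : (fun q => a q * u q + b q * v q + m q * w q)
      = fun q => ((fun q => a q * u q) q + (fun q => b q * v q) q) + (fun q => m q * w q) q := rfl
  rw [e, pdy_add (by fun_prop) (by fun_prop), pdy_add (by fun_prop) (by fun_prop),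
    pdy_mul ha hu, pdy_mul hb hv, pdy_mul hm hw]

lemma pdy_sum3' (ha : DifferentiableAt ℝ a p) (hu : DifferentiableAt ℝ u p)
    (hb : DifferentiableAt ℝ b p) (hv : DifferentiableAt ℝ v p)
    (hm : DifferentiableAt ℝ m p) (hw : DifferentiableAt ℝ w p) :
    pdy (fun q => a q * u q + b q * v q - m q * w q) p
      = (a p * pdy u p + u p * pdy a p) + (b p * pdy v p + v p * pdy b p)
        - (m p * pdy w p + w p * pdy m p) := by
  have e : (fun q => a q * u q + b q * v q - m q * w q)
      = fun q => ((fun q => a q * u q) q + (fun q => b q * v q) q) - (fun q => m q * w q) q := rfl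
  rw [e, pdy_sub (by fun_prop) (by fun_prop), pdy_add (by fun_prop) (by fun_prop),
    pdy_mul ha hu, pdy_mul hb hv, pdy_mul hm hw]

/-- the three operators -/
noncomputable def opL1 (α : ℝ) (f : ℝ × ℝ → ℝ) : ℝ × ℝ → ℝ :=
  fun p => p.1 * pdy f p - p.2 * pdx f p + α * f p
noncomputable def opL2 (α : ℝ) (f : ℝ × ℝ → ℝ) : ℝ × ℝ → ℝ :=
  fun p => (1 + p.1 ^ 2 - p.2 ^ 2) * pdx f p + 2 * p.1 * p.2 * pdy f p + 2 * α * p.2 * f p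
noncomputable def opL3 (α : ℝ) (f : ℝ × ℝ → ℝ) : ℝ × ℝ → ℝ :=
  fun p => 2 * p.1 * p.2 * pdx f p + (1 - p.1 ^ 2 + p.2 ^ 2) * pdy f p - 2 * α * p.1 * f p

theorem comm_L2L3 (α : ℝ) (hf : ContDiff ℝ (⊤ : ℕ∞) f) (p : ℝ × ℝ) :
    opL2 α (opL3 α f) p - opL3 α (opL2 α f) p = -4 * opL1 α f p := by
  have hdf : Differentiable ℝ f := hf.differentiable (by simp)
  have hu : ContDiff ℝ (⊤ : ℕ∞) (pdx f) := contDiff_pdx hf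
  have hv : ContDiff ℝ (⊤ : ℕ∞) (pdy f) := contDiff_pdy hf
  have hdu : Differentiable ℝ (pdx f) := hu.differentiable (by simp)
  have hdv : Differentiable ℝ (pdy f) := hv.differentiable (by simp)
  have eL2 : opL2 α (opL3 α f) p
      = (1 + p.1 ^ 2 - p.2 ^ 2) * pdx (opL3 α f) p + 2 * p.1 * p.2 * pdy (opL3 α f) p
        + 2 * α * p.2 * opL3 α f p := rfl
  have eL3 : opL3 α (opL2 α f) p
      = 2 * p.1 * p.2 * pdx (opL2 α f) p + (1 - p.1 ^ 2 + p.2 ^ 2) * pdy (opL2 α f) p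
        - 2 * α * p.1 * opL2 α f p := rfl
  have e3 : opL3 α f = fun q => (fun q : ℝ × ℝ => 2 * q.1 * q.2) q * pdx f q
      + (fun q : ℝ × ℝ => 1 - q.1 ^ 2 + q.2 ^ 2) q * pdy f q
      - (fun q : ℝ × ℝ => 2 * α * q.1) q * f q := rfl
  have e2 : opL2 α f = fun q => (fun q : ℝ × ℝ => 1 + q.1 ^ 2 - q.2 ^ 2) q * pdx f q
      + (fun q : ℝ × ℝ => 2 * q.1 * q.2) q * pdy f q
      + (fun q : ℝ × ℝ => 2 * α * q.2) q * f q := rfl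
  have h3x : pdx (opL3 α f) p
      = (2 * p.1 * p.2 * pdx (pdx f) p + pdx f p * (2 * p.2))
        + ((1 - p.1 ^ 2 + p.2 ^ 2) * pdx (pdy f) p + pdy f p * (-2 * p.1))
        - (2 * α * p.1 * pdx f p + f p * (2 * α)) := by
    rw [e3, pdx_sum3' (by fun_prop) (hdu p) (by fun_prop) (hdv p) (by fun_prop) (hdf p),
      pdx_B, pdx_C, pdx_N]
  have h3y : pdy (opL3 α f) p
      = (2 * p.1 * p.2 * pdy (pdx f) p + pdx f p * (2 * p.1))
        + ((1 - p.1 ^ 2 + p.2 ^ 2) * pdy (pdy f) p + pdy f p * (2 * p.2))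
        - (2 * α * p.1 * pdy f p + f p * 0) := by
    rw [e3, pdy_sum3' (by fun_prop) (hdu p) (by fun_prop) (hdv p) (by fun_prop) (hdf p),
      pdy_B, pdy_C, pdy_N]
  have h2x : pdx (opL2 α f) p
      = ((1 + p.1 ^ 2 - p.2 ^ 2) * pdx (pdx f) p + pdx f p * (2 * p.1))
        + (2 * p.1 * p.2 * pdx (pdy f) p + pdy f p * (2 * p.2))
        + (2 * α * p.2 * pdx f p + f p * 0) := by
    rw [e2, pdx_sum3 (by fun_prop) (hdu p) (by fun_prop) (hdv p) (by fun_prop) (hdf p),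
      pdx_A, pdx_B, pdx_M]
  have h2y : pdy (opL2 α f) p
      = ((1 + p.1 ^ 2 - p.2 ^ 2) * pdy (pdx f) p + pdx f p * (-2 * p.2))
        + (2 * p.1 * p.2 * pdy (pdy f) p + pdy f p * (2 * p.1))
        + (2 * α * p.2 * pdy f p + f p * (2 * α)) := by
    rw [e2, pdy_sum3 (by fun_prop) (hdu p) (by fun_prop) (hdv p) (by fun_prop) (hdf p),
      pdy_A, pdy_B, pdy_M]
  have hschwarz : pdx (pdy f) p = pdy (pdx f) p := pdx_pdy hf
  rw [eL2, eL3, h3x, h3y, h2x, h2y, hschwarz]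
  show _ = -4 * (p.1 * pdy f p - p.2 * pdx f p + α * f p)
  unfold opL2 opL3
  ring

end Ops

section Linearity
variable (α : ℝ)

lemma opL1_add (hf : Differentiable ℝ f) (hg : Differentiable ℝ g) :
    opL1 α (f + g) = opL1 α f + opL1 α g := by
  have e : (f + g) = fun q => f q + g q := rfl
  funext p
  show opL1 α (f + g) p = opL1 α f p + opL1 α g p
  unfold opL1
  rw [e, pdx_add (hf p) (hg p), pdy_add (hf p) (hg p)]
  show _ = _ + (p.1 * pdy g p - p.2 * pdx g p + α * g p)
  ring

lemma opL1_smul (hf : Differentiable ℝ f) :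
    opL1 α (c • f) = c • opL1 α f := by
  have e : (c • f) = fun q => c * f q := rfl
  funext p
  show opL1 α (c • f) p = c * opL1 α f p
  unfold opL1
  rw [e, pdx_smul (hf p), pdy_smul (hf p)]
  show p.1 * (c * pdy f p) - p.2 * (c * pdx f p) + α * (c * f p) = _
  ring

lemma opL2_add (hf : Differentiable ℝ f) (hg : Differentiable ℝ g) :
    opL2 α (f + g) = opL2 α f + opL2 α g := by
  have e : (f + g) = fun q => f q + g q := rfl
  funext p
  show opL2 α (f + g) p = opL2 α f p + opL2 α g p
  unfold opL2
  rw [e, pdx_add (hf p) (hg p), pdy_add (hf p) (hg p)]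
  show _ = _ + ((1 + p.1 ^ 2 - p.2 ^ 2) * pdx g p + 2 * p.1 * p.2 * pdy g p + 2 * α * p.2 * g p)
  ring

lemma opL2_smul (hf : Differentiable ℝ f) :
    opL2 α (c • f) = c • opL2 α f := by
  have e : (c • f) = fun q => c * f q := rfl
  funext p
  show opL2 α (c • f) p = c * opL2 α f p
  unfold opL2
  rw [e, pdx_smul (hf p), pdy_smul (hf p)]
  show (1 + p.1 ^ 2 - p.2 ^ 2) * (c * pdx f p) + 2 * p.1 * p.2 * (c * pdy f p)
      + 2 * α * p.2 * (c * f p) = _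
  ring

lemma opL3_add (hf : Differentiable ℝ f) (hg : Differentiable ℝ g) :
    opL3 α (f + g) = opL3 α f + opL3 α g := by
  have e : (f + g) = fun q => f q + g q := rfl
  funext p
  show opL3 α (f + g) p = opL3 α f p + opL3 α g p
  unfold opL3
  rw [e, pdx_add (hf p) (hg p), pdy_add (hf p) (hg p)]
  show _ = _ + (2 * p.1 * p.2 * pdx g p + (1 - p.1 ^ 2 + p.2 ^ 2) * pdy g p - 2 * α * p.1 * g p)
  ring

lemma opL3_smul (hf : Differentiable ℝ f) :
    opL3 α (c • f) = c • opL3 α f := by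
  have e : (c • f) = fun q => c * f q := rfl
  funext p
  show opL3 α (c • f) p = c * opL3 α f p
  unfold opL3
  rw [e, pdx_smul (hf p), pdy_smul (hf p)]
  show 2 * p.1 * p.2 * (c * pdx f p) + (1 - p.1 ^ 2 + p.2 ^ 2) * (c * pdy f p)
      - 2 * α * p.1 * (c * f p) = _
  ring

end Linearity

/-- the rotation vector field applied to `f` -/
noncomputable def X1 (f : ℝ × ℝ → ℝ) : ℝ × ℝ → ℝ :=
  fun p => p.1 * pdy f p - p.2 * pdx f p

variable {f g : ℝ × ℝ → ℝ} {ρ θ : ℝ}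

lemma circle_hasDerivAt (hf : ContDiff ℝ (⊤ : ℕ∞) f) (ρ θ : ℝ) :
    HasDerivAt (fun t => f (ρ * Real.cos t, ρ * Real.sin t))
      (X1 f (ρ * Real.cos θ, ρ * Real.sin θ)) θ := by
  have hc : HasDerivAt (fun t : ℝ => ((ρ * Real.cos t, ρ * Real.sin t) : ℝ × ℝ))
      ((-(ρ * Real.sin θ), ρ * Real.cos θ)) θ := by
    exact ((Real.hasDerivAt_cos θ).const_mul ρ).prodMk ((Real.hasDerivAt_sin θ).const_mul ρ) |>.congr_deriv (by ring_nf)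
  have hdf : HasFDerivAt f (fderiv ℝ f (ρ * Real.cos θ, ρ * Real.sin θ)) (ρ * Real.cos θ, ρ * Real.sin θ) :=
    (hf.differentiable (by simp) _).hasFDerivAt
  have h := hdf.comp_hasDerivAt θ hc
  refine h.congr_deriv ?_
  have : ((-(ρ * Real.sin θ), ρ * Real.cos θ) : ℝ × ℝ)
      = (-(ρ * Real.sin θ)) • ((1:ℝ), (0:ℝ)) + (ρ * Real.cos θ) • ((0:ℝ), (1:ℝ)) := by
    simp
  rw [this, map_add, (fderiv ℝ f _).map_smul, (fderiv ℝ f _).map_smul]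
  simp [X1, pdx, pdy]
  ring

noncomputable def circInt (ρ : ℝ) (f g : ℝ × ℝ → ℝ) : ℝ :=
  ∫ θ in (-π)..π, f (ρ * Real.cos θ, ρ * Real.sin θ) * g (ρ * Real.cos θ, ρ * Real.sin θ)

lemma circInt_skew (hf : ContDiff ℝ (⊤ : ℕ∞) f) (hg : ContDiff ℝ (⊤ : ℕ∞) g) (ρ : ℝ) :
    circInt ρ (X1 f) g + circInt ρ f (X1 g) = 0 := by
  have hcf : Continuous f := hf.continuous
  have hcg : Continuous g := hg.continuous
  have hcX1f : Continuous (X1 f) := by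
    have h1 : Continuous (pdx f) := (((hf.fderiv_right (le_refl _)).clm_apply contDiff_const : ContDiff ℝ (⊤:ℕ∞) (pdx f))).continuous
    have h2 : Continuous (pdy f) := (((hf.fderiv_right (le_refl _)).clm_apply contDiff_const : ContDiff ℝ (⊤:ℕ∞) (pdy f))).continuous
    unfold X1; fun_prop
  have hcX1g : Continuous (X1 g) := by
    have h1 : Continuous (pdx g) := (((hg.fderiv_right (le_refl _)).clm_apply contDiff_const : ContDiff ℝ (⊤:ℕ∞) (pdx g))).continuous
    have h2 : Continuous (pdy g) := (((hg.fderiv_right (le_refl _)).clm_apply contDiff_const : ContDiff ℝ (⊤:ℕ∞) (pdy g))).continuous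
    unfold X1; fun_prop
  have hcc : Continuous (fun t : ℝ => ((ρ * Real.cos t, ρ * Real.sin t) : ℝ × ℝ)) := by fun_prop
  have key : circInt ρ (X1 f) g + circInt ρ f (X1 g)
      = ∫ θ in (-π)..π, (X1 f (ρ * Real.cos θ, ρ * Real.sin θ) * g (ρ * Real.cos θ, ρ * Real.sin θ)
          + f (ρ * Real.cos θ, ρ * Real.sin θ) * X1 g (ρ * Real.cos θ, ρ * Real.sin θ)) := by
    rw [circInt, circInt, ← intervalIntegral.integral_add]
    · exact ((hcX1f.comp hcc).mul (hcg.comp hcc)).intervalIntegrable _ _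
    · exact ((hcf.comp hcc).mul (hcX1g.comp hcc)).intervalIntegrable _ _
  rw [key]
  have hderiv : ∀ θ ∈ Set.uIcc (-π) π,
      HasDerivAt (fun t => f (ρ * Real.cos t, ρ * Real.sin t) * g (ρ * Real.cos t, ρ * Real.sin t))
        (X1 f (ρ * Real.cos θ, ρ * Real.sin θ) * g (ρ * Real.cos θ, ρ * Real.sin θ)
          + f (ρ * Real.cos θ, ρ * Real.sin θ) * X1 g (ρ * Real.cos θ, ρ * Real.sin θ)) θ := by
    intro θ _
    exact ((circle_hasDerivAt hf ρ θ).mul (circle_hasDerivAt hg ρ θ)).congr_deriv (by ring)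
  have hint : IntervalIntegrable (fun θ =>
      X1 f (ρ * Real.cos θ, ρ * Real.sin θ) * g (ρ * Real.cos θ, ρ * Real.sin θ)
        + f (ρ * Real.cos θ, ρ * Real.sin θ) * X1 g (ρ * Real.cos θ, ρ * Real.sin θ))
      MeasureTheory.volume (-π) π := by
    apply Continuous.intervalIntegrable; fun_prop
  rw [intervalIntegral.integral_eq_sub_of_hasDerivAt hderiv hint]
  simp

/-- functions vanishing on the circle of radius `ρ` (angles in `Ioc (-π) π`) -/
def circZero (ρ : ℝ) : Submodule ℝ (ℝ × ℝ → ℝ) where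
  carrier := {f | ∀ θ ∈ Set.Ioc (-π) π, f (ρ * Real.cos θ, ρ * Real.sin θ) = 0}
  add_mem' := by intro a b ha hb θ hθ; simp [Pi.add_apply, ha θ hθ, hb θ hθ]
  zero_mem' := by intro θ hθ; rfl
  smul_mem' := by intro c a ha θ hθ; simp [Pi.smul_apply, ha θ hθ]

lemma circInt_self_nonneg (f : ℝ × ℝ → ℝ) (ρ : ℝ) : 0 ≤ circInt ρ f f := by
  apply intervalIntegral.integral_nonneg (by linarith [Real.pi_pos] : (-π : ℝ) ≤ π)
  intro θ _
  exact mul_self_nonneg _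

lemma circZero_of_circInt_self_eq_zero (hf : Continuous f) (hz : circInt ρ f f = 0) :
    f ∈ circZero ρ := by
  have hcc : Continuous (fun t : ℝ => ((ρ * Real.cos t, ρ * Real.sin t) : ℝ × ℝ)) := by fun_prop
  set F : ℝ → ℝ := fun θ => f (ρ * Real.cos θ, ρ * Real.sin θ) * f (ρ * Real.cos θ, ρ * Real.sin θ)
    with hF
  have hFc : Continuous F := by fun_prop
  have hnonneg : 0 ≤ᵐ[MeasureTheory.volume.restrict (Set.Ioc (-π) π ∪ Set.Ioc π (-π))] F :=
    Filter.Eventually.of_forall fun θ => mul_self_nonneg _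
  have hFi : IntervalIntegrable F MeasureTheory.volume (-π) π := hFc.intervalIntegrable _ _
  have h0 : F =ᵐ[MeasureTheory.volume.restrict (Set.Ioc (-π) π ∪ Set.Ioc π (-π))] 0 :=
    (intervalIntegral.integral_eq_zero_iff_of_nonneg_ae hnonneg hFi).mp hz
  have hsub : Set.Ioc (-π) π ⊆ Set.Ioc (-π) π ∪ Set.Ioc π (-π) := Set.subset_union_left
  have h0' : F =ᵐ[MeasureTheory.volume.restrict (Set.Ioc (-π) π)] 0 :=
    MeasureTheory.ae_restrict_of_ae_restrict_of_subset hsub h0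
  have heq : Set.EqOn F 0 (Set.Ioc (-π) π) := by
    apply MeasureTheory.Measure.eqOn_of_ae_eq h0' hFc.continuousOn continuousOn_const
    rw [interior_Ioc, closure_Ioo (by linarith [Real.pi_pos] : (-π:ℝ) ≠ π)]
    exact Set.Ioc_subset_Icc_self
  intro θ hθ
  have := heq hθ
  simp only [F, Pi.zero_apply] at this
  exact mul_self_eq_zero.mp this

lemma eq_zero_of_mem_all_ratCircles (hf : Continuous f)
    (h : ∀ q : ℚ, f ∈ circZero |(q : ℝ)|) : f = 0 := by
  funext p
  set z : ℂ := ⟨p.1, p.2⟩ with hz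
  have hre : ‖z‖ * Real.cos (Complex.arg z) = p.1 := Complex.norm_mul_cos_arg z
  have him : ‖z‖ * Real.sin (Complex.arg z) = p.2 := Complex.norm_mul_sin_arg z
  have hargmem : Complex.arg z ∈ Set.Ioc (-π) π := Complex.arg_mem_Ioc z
  set θ := Complex.arg z
  have hg : Continuous (fun t : ℝ => f (|t| * Real.cos θ, |t| * Real.sin θ)) := by fun_prop
  have hzero : (fun t : ℝ => f (|t| * Real.cos θ, |t| * Real.sin θ)) = fun _ => (0:ℝ) := by
    apply Continuous.ext_on Rat.denseRange_cast hg continuous_const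
    rintro - ⟨q, rfl⟩
    exact h q θ hargmem
  have := congrFun hzero ‖z‖
  simp only [abs_of_nonneg (norm_nonneg z)] at this
  rw [hre, him] at this
  simpa using this

variable {f' : ℝ × ℝ → ℝ} {c : ℝ}

lemma circInt_add_left (hf : Continuous f) (hf' : Continuous f') (hg : Continuous g) (ρ : ℝ) :
    circInt ρ (f + f') g = circInt ρ f g + circInt ρ f' g := by
  unfold circInt
  rw [← intervalIntegral.integral_add]
  · apply intervalIntegral.integral_congr
    intro θ _
    show (f _ + f' _) * _ = _
    ring
  · exact (by fun_prop : Continuous fun θ : ℝ =>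
      f (ρ * Real.cos θ, ρ * Real.sin θ) * g (ρ * Real.cos θ, ρ * Real.sin θ)).intervalIntegrable _ _
  · exact (by fun_prop : Continuous fun θ : ℝ =>
      f' (ρ * Real.cos θ, ρ * Real.sin θ) * g (ρ * Real.cos θ, ρ * Real.sin θ)).intervalIntegrable _ _

lemma circInt_smul_left (ρ : ℝ) :
    circInt ρ (c • f) g = c * circInt ρ f g := by
  unfold circInt
  rw [← intervalIntegral.integral_const_mul]
  apply intervalIntegral.integral_congr
  intro θ _
  show (c * f _) * _ = _
  ring

lemma circInt_comm (ρ : ℝ) : circInt ρ f g = circInt ρ g f := by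
  unfold circInt
  apply intervalIntegral.integral_congr
  intro θ _
  ring

section Chain

/-- restriction of an operator to an invariant subspace as an endomorphism -/
noncomputable def restrictOp (V : Submodule ℝ (ℝ × ℝ → ℝ)) (T : (ℝ × ℝ → ℝ) → ℝ × ℝ → ℝ)
    (hT : ∀ f ∈ V, T f ∈ V)
    (hadd : ∀ f g : V, T ((f : ℝ × ℝ → ℝ) + (g : ℝ × ℝ → ℝ)) = T f + T g)
    (hsmul : ∀ (c : ℝ) (f : V), T (c • (f : ℝ × ℝ → ℝ)) = c • T f) :
    Module.End ℝ V where
  toFun := fun x => ⟨T x, hT x x.2⟩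
  map_add' := fun x y => Subtype.ext (by
    show T ↑(x + y) = T ↑x + T ↑y
    rw [Submodule.coe_add]; exact hadd x y)
  map_smul' := fun c x => Subtype.ext (by
    show T ↑(c • x) = c • T ↑x
    rw [Submodule.coe_smul]; exact hsmul c x)

@[simp] lemma restrictOp_coe (V : Submodule ℝ (ℝ × ℝ → ℝ))
    (T : (ℝ × ℝ → ℝ) → ℝ × ℝ → ℝ) (hT) (hadd) (hsmul) (x : V) :
    ((restrictOp V T hT hadd hsmul x : V) : ℝ × ℝ → ℝ) = T x := rfl

/-- an enumeration of the nonnegative rational radii -/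
noncomputable def ratRadius (k : ℕ) : ℝ := |(((Denumerable.eqv ℚ).symm k : ℚ) : ℝ)|

/-- chain of subspaces of functions vanishing on the first `m` rational circles -/
noncomputable def chainC (V : Submodule ℝ (ℝ × ℝ → ℝ)) (m : ℕ) : Submodule ℝ (ℝ × ℝ → ℝ) :=
  V ⊓ ⨅ k ∈ Finset.range m, circZero (ratRadius k)

lemma mem_chainC {V : Submodule ℝ (ℝ × ℝ → ℝ)} {f : ℝ × ℝ → ℝ} {m : ℕ} :
    f ∈ chainC V m ↔ f ∈ V ∧ ∀ k, k < m → f ∈ circZero (ratRadius k) := by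
  simp [chainC, Submodule.mem_inf, Submodule.mem_iInf, Finset.mem_range]

lemma chainC_anti {V : Submodule ℝ (ℝ × ℝ → ℝ)} {m m' : ℕ} (h : m ≤ m') :
    chainC V m' ≤ chainC V m := by
  intro f hf
  rw [mem_chainC] at hf ⊢
  exact ⟨hf.1, fun k hk => hf.2 k (lt_of_lt_of_le hk h)⟩

lemma exists_min_chain (V : Submodule ℝ (ℝ × ℝ → ℝ)) [FiniteDimensional ℝ V] :
    ∃ m₀, ∀ m, chainC V m₀ ≤ chainC V m := by
  have hle : ∀ m, chainC V m ≤ V := fun m => inf_le_left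
  let d : ℕ → ℕ := fun m => Module.finrank ℝ (chainC V m)
  obtain ⟨m₀, hm₀⟩ := Nat.sInf_mem (Set.range_nonempty d)
  refine ⟨m₀, fun m => ?_⟩
  rcases le_total m m₀ with h | h
  · exact chainC_anti h
  · haveI : FiniteDimensional ℝ (chainC V m₀) := Submodule.finiteDimensional_of_le (hle m₀)
    have h1 : chainC V m ≤ chainC V m₀ := chainC_anti h
    have h2 : d m₀ ≤ d m := hm₀ ▸ Nat.sInf_le ⟨m, rfl⟩
    rw [Submodule.eq_of_le_of_finrank_le h1 h2]

lemma chainC_min_eq_bot (V : Submodule ℝ (ℝ × ℝ → ℝ))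
    (hsmooth : ∀ f ∈ V, ContDiff ℝ (⊤ : ℕ∞) f) {m₀ : ℕ}
    (hmin : ∀ m, chainC V m₀ ≤ chainC V m) : chainC V m₀ = ⊥ := by
  rw [eq_bot_iff]
  intro f hf
  have hfV : f ∈ V := (mem_chainC.mp hf).1
  have hfr : ∀ q : ℚ, f ∈ circZero |(q : ℝ)| := by
    intro q
    have hrk : ratRadius ((Denumerable.eqv ℚ) q) = |(q : ℝ)| := by
      simp [ratRadius]
    have hfk : f ∈ chainC V ((Denumerable.eqv ℚ) q + 1) := hmin _ hf
    exact hrk ▸ (mem_chainC.mp hfk).2 _ (Nat.lt_succ_self _)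
  have h0 := eq_zero_of_mem_all_ratCircles (hsmooth f hfV).continuous hfr
  simp [h0]

end Chain

/-- If the operators `f ↦ x f_y - y f_x + α f`,
`f ↦ (1 + x² - y²) f_x + 2xy f_y + 2αy f`,
`f ↦ 2xy f_x + (1 - x² + y²) f_y - 2αx f` admit a nonzero finite-dimensional
invariant subspace of smooth real functions, then `α = 0`. -/
theorem alpha_zero_so3_case
    (α : ℝ) (V : Submodule ℝ (ℝ × ℝ → ℝ))
    (hsmooth : ∀ f ∈ V, ContDiff ℝ (⊤ : ℕ∞) f)
    (hne : V ≠ ⊥) (hfin : FiniteDimensional ℝ V)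
    (hL₁ : ∀ f ∈ V, (fun p => p.1 * pdy f p - p.2 * pdx f p + α * f p) ∈ V)
    (hL₂ : ∀ f ∈ V,
      (fun p => (1 + p.1 ^ 2 - p.2 ^ 2) * pdx f p + 2 * p.1 * p.2 * pdy f p
        + 2 * α * p.2 * f p) ∈ V)
    (hL₃ : ∀ f ∈ V,
      (fun p => 2 * p.1 * p.2 * pdx f p + (1 - p.1 ^ 2 + p.2 ^ 2) * pdy f p
        - 2 * α * p.1 * f p) ∈ V) :
    α = 0 := by
  classical
  have hsm : ∀ x : V, ContDiff ℝ (⊤ : ℕ∞) (x : ℝ × ℝ → ℝ) := fun x => hsmooth _ x.2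
  have hdf : ∀ x : V, Differentiable ℝ (x : ℝ × ℝ → ℝ) :=
    fun x => (hsm x).differentiable (by simp)
  have hcont : ∀ x : V, Continuous (x : ℝ × ℝ → ℝ) := fun x => (hsm x).continuous
  -- the three endomorphisms of V
  let E1 : Module.End ℝ V := restrictOp V (opL1 α) (fun f hf => hL₁ f hf)
    (fun x y => opL1_add α (hdf x) (hdf y)) (fun c x => opL1_smul α (hdf x))
  let E2 : Module.End ℝ V := restrictOp V (opL2 α) (fun f hf => hL₂ f hf)
    (fun x y => opL2_add α (hdf x) (hdf y)) (fun c x => opL2_smul α (hdf x))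
  let E3 : Module.End ℝ V := restrictOp V (opL3 α) (fun f hf => hL₃ f hf)
    (fun x y => opL3_add α (hdf x) (hdf y)) (fun c x => opL3_smul α (hdf x))
  have hE1 : ∀ x : V, ((E1 x : V) : ℝ × ℝ → ℝ) = opL1 α x := fun _ => rfl
  have hE2 : ∀ x : V, ((E2 x : V) : ℝ × ℝ → ℝ) = opL2 α x := fun _ => rfl
  have hE3 : ∀ x : V, ((E3 x : V) : ℝ × ℝ → ℝ) = opL3 α x := fun _ => rfl
  -- trace of E1 vanishes (commutator identity)
  have hcomm : E2 * E3 - E3 * E2 = (-4 : ℝ) • E1 := by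
    apply LinearMap.ext; intro x
    apply Subtype.ext
    rw [LinearMap.sub_apply, LinearMap.smul_apply, AddSubgroupClass.coe_sub,
      SetLike.val_smul, Module.End.mul_apply, Module.End.mul_apply, hE1]
    funext p
    rw [Pi.sub_apply, Pi.smul_apply, smul_eq_mul]
    have e23 : ((E2 (E3 x) : V) : ℝ × ℝ → ℝ) = opL2 α (opL3 α x) := by
      rw [hE2, hE3]
    have e32 : ((E3 (E2 x) : V) : ℝ × ℝ → ℝ) = opL3 α (opL2 α x) := by
      rw [hE3, hE2]
    rw [e23, e32]
    exact comm_L2L3 α (hsm x) p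
  have htrE1 : LinearMap.trace ℝ V E1 = 0 := by
    have hsub : LinearMap.trace ℝ V (E2 * E3 - E3 * E2)
        = LinearMap.trace ℝ V (E2 * E3) - LinearMap.trace ℝ V (E3 * E2) :=
      map_sub (LinearMap.trace ℝ V) _ _
    have hsm4 : LinearMap.trace ℝ V ((-4 : ℝ) • E1) = (-4 : ℝ) * LinearMap.trace ℝ V E1 := by
      rw [LinearMap.map_smul, smul_eq_mul]
    have hcom : LinearMap.trace ℝ V (E2 * E3) = LinearMap.trace ℝ V (E3 * E2) :=
      LinearMap.trace_mul_comm ℝ E2 E3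
    have h := congrArg (LinearMap.trace ℝ V) hcomm
    rw [hsub, hsm4, hcom] at h
    linarith [h]
  -- the rotation generator D
  let Dop : Module.End ℝ V := E1 - α • LinearMap.id
  have hDcoe : ∀ x : V, ((Dop x : V) : ℝ × ℝ → ℝ) = X1 x := by
    intro x
    have : Dop x = E1 x - α • x := rfl
    rw [this]
    funext p
    rw [AddSubgroupClass.coe_sub, SetLike.val_smul, Pi.sub_apply, Pi.smul_apply, hE1,
      smul_eq_mul]
    show opL1 α (x : ℝ × ℝ → ℝ) p - α * (x : ℝ × ℝ → ℝ) p = X1 (x : ℝ × ℝ → ℝ) p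
    unfold opL1 X1
    ring
  -- minimal chain subspace
  obtain ⟨m₀, hmin⟩ := exists_min_chain V
  have hbot : chainC V m₀ = ⊥ := chainC_min_eq_bot V hsmooth hmin
  -- the bilinear form
  let Φ : (ℝ × ℝ → ℝ) → (ℝ × ℝ → ℝ) → ℝ :=
    fun f g => ∑ k ∈ Finset.range m₀, circInt (ratRadius k) f g
  let Bf : V →ₗ[ℝ] V →ₗ[ℝ] ℝ := LinearMap.mk₂ ℝ (fun x y => Φ x y)
    (by
      intro x x' y
      show Φ ((x : ℝ × ℝ → ℝ) + (x' : ℝ × ℝ → ℝ)) y = Φ x y + Φ x' y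
      rw [show Φ ((x : ℝ × ℝ → ℝ) + (x' : ℝ × ℝ → ℝ)) y
          = ∑ k ∈ Finset.range m₀, circInt (ratRadius k) ((x : ℝ × ℝ → ℝ) + x') y from rfl,
        ← Finset.sum_add_distrib]
      exact Finset.sum_congr rfl fun k _ =>
        circInt_add_left (hcont x) (hcont x') (hcont y) (ratRadius k))
    (by
      intro c x y
      show Φ (c • (x : ℝ × ℝ → ℝ)) y = c * Φ x y
      rw [show Φ (c • (x : ℝ × ℝ → ℝ)) y
          = ∑ k ∈ Finset.range m₀, circInt (ratRadius k) (c • (x : ℝ × ℝ → ℝ)) y from rfl,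
        Finset.mul_sum]
      exact Finset.sum_congr rfl fun k _ => circInt_smul_left (ratRadius k))
    (by
      intro x y y'
      show Φ x ((y : ℝ × ℝ → ℝ) + (y' : ℝ × ℝ → ℝ)) = Φ x y + Φ x y'
      have e1 : ∀ g, Φ (x : ℝ × ℝ → ℝ) g = Φ g x := fun g =>
        Finset.sum_congr rfl fun k _ => circInt_comm (ratRadius k)
      rw [e1, e1 y, e1 y']
      rw [show Φ ((y : ℝ × ℝ → ℝ) + (y' : ℝ × ℝ → ℝ)) x
          = ∑ k ∈ Finset.range m₀, circInt (ratRadius k) ((y : ℝ × ℝ → ℝ) + y') x from rfl,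
        ← Finset.sum_add_distrib]
      exact Finset.sum_congr rfl fun k _ =>
        circInt_add_left (hcont y) (hcont y') (hcont x) (ratRadius k))
    (by
      intro c x y
      show Φ (x : ℝ × ℝ → ℝ) (c • (y : ℝ × ℝ → ℝ)) = c * Φ x y
      have hterm : ∀ k : ℕ, circInt (ratRadius k) (x : ℝ × ℝ → ℝ) (c • (y : ℝ × ℝ → ℝ))
          = c * circInt (ratRadius k) (x : ℝ × ℝ → ℝ) (y : ℝ × ℝ → ℝ) := by
        intro k
        rw [circInt_comm (f := ((x : ℝ × ℝ → ℝ))) (g := (c • (y : ℝ × ℝ → ℝ))),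
          circInt_smul_left, circInt_comm (f := ((y : ℝ × ℝ → ℝ))) (g := ((x : ℝ × ℝ → ℝ)))]
      rw [show Φ (x : ℝ × ℝ → ℝ) (c • (y : ℝ × ℝ → ℝ))
          = ∑ k ∈ Finset.range m₀, circInt (ratRadius k) (x : ℝ × ℝ → ℝ) (c • (y : ℝ × ℝ → ℝ)) from rfl,
        Finset.mul_sum]
      exact Finset.sum_congr rfl fun k _ => hterm k)
  have hBf : ∀ x y : V, Bf x y = ∑ k ∈ Finset.range m₀, circInt (ratRadius k) x y :=
    fun _ _ => rfl
  -- positive definiteness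
  have hposdef : ∀ x : V, Bf x x = 0 → x = 0 := by
    intro x hx
    rw [hBf] at hx
    have h0 : ∀ k ∈ Finset.range m₀, circInt (ratRadius k) x x = 0 :=
      (Finset.sum_eq_zero_iff_of_nonneg fun k _ => circInt_self_nonneg _ _).mp hx
    have hmem : (x : ℝ × ℝ → ℝ) ∈ chainC V m₀ :=
      mem_chainC.mpr ⟨x.2, fun k hk =>
        circZero_of_circInt_self_eq_zero (hcont x) (h0 k (Finset.mem_range.mpr hk))⟩
    rw [hbot, Submodule.mem_bot] at hmem
    exact Subtype.ext hmem
  have hnd : LinearMap.BilinForm.Nondegenerate Bf := by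
    exact ⟨fun x hx => hposdef x (hx x), fun x hx => hposdef x (hx x)⟩
  -- skew-symmetry of Dop
  have hskew : ∀ x y : V, Bf (Dop x) y = -(Bf x (Dop y)) := by
    intro x y
    have h1 : Bf (Dop x) y = Φ (X1 (x : ℝ × ℝ → ℝ)) y := by
      rw [hBf]
      exact Finset.sum_congr rfl fun k _ => by rw [show ((Dop x : V) : ℝ × ℝ → ℝ) = X1 x from hDcoe x]
    have h2 : Bf x (Dop y) = Φ (x : ℝ × ℝ → ℝ) (X1 (y : ℝ × ℝ → ℝ)) := by
      rw [hBf]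
      exact Finset.sum_congr rfl fun k _ => by rw [show ((Dop y : V) : ℝ × ℝ → ℝ) = X1 y from hDcoe y]
    have h3 : Φ (X1 (x : ℝ × ℝ → ℝ)) y + Φ (x : ℝ × ℝ → ℝ) (X1 (y : ℝ × ℝ → ℝ)) = 0 := by
      rw [show Φ (X1 (x : ℝ × ℝ → ℝ)) (y : ℝ × ℝ → ℝ)
          = ∑ k ∈ Finset.range m₀, circInt (ratRadius k) (X1 (x : ℝ × ℝ → ℝ)) y from rfl,
        show Φ (x : ℝ × ℝ → ℝ) (X1 (y : ℝ × ℝ → ℝ))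
          = ∑ k ∈ Finset.range m₀, circInt (ratRadius k) (x : ℝ × ℝ → ℝ) (X1 (y : ℝ × ℝ → ℝ)) from rfl,
        ← Finset.sum_add_distrib]
      exact Finset.sum_eq_zero fun k _ => circInt_skew (hsm x) (hsm y) (ratRadius k)
    rw [h1, h2]
    linarith [h3]
  -- matrices
  haveI : Nontrivial V := Submodule.nontrivial_iff_ne_bot.mpr hne
  set n := Module.finrank ℝ V with hndef
  have hn : 0 < n := Module.finrank_pos
  let b : Module.Basis (Fin n) ℝ V := Module.finBasis ℝ V
  set M := LinearMap.toMatrix b b Dop with hM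
  set G := LinearMap.BilinForm.toMatrix b Bf with hG
  have hform : LinearMap.BilinForm.comp Bf Dop LinearMap.id
      = -(LinearMap.BilinForm.comp Bf LinearMap.id Dop) := by
    apply LinearMap.ext; intro x; apply LinearMap.ext; intro y
    simp only [LinearMap.BilinForm.comp_apply, LinearMap.neg_apply, LinearMap.id_apply]
    exact hskew x y
  have hmat : Mᵀ * G = -(G * M) := by
    have h := congrArg (LinearMap.BilinForm.toMatrix b) hform
    have hneg : (LinearMap.BilinForm.toMatrix b) (-(LinearMap.BilinForm.comp Bf LinearMap.id Dop))
        = -((LinearMap.BilinForm.toMatrix b) (LinearMap.BilinForm.comp Bf LinearMap.id Dop)) := by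
      set_option synthInstance.maxHeartbeats 1000000 in
      exact map_neg (LinearMap.BilinForm.toMatrix b) _
    rw [hneg, BilinForm.toMatrix_comp b b, BilinForm.toMatrix_comp b b,
      LinearMap.toMatrix_id, Matrix.transpose_one, Matrix.mul_one, Matrix.one_mul] at h
    rw [← hM, ← hG] at h
    exact h
  have hdet : G.det ≠ 0 := (LinearMap.BilinForm.nondegenerate_iff_det_ne_zero b).mp hnd
  have htrM : M.trace = 0 := by
    have hGunit : IsUnit G.det := isUnit_iff_ne_zero.mpr hdet
    have h1 : Mᵀ = -(G * M) * G⁻¹ := by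
      rw [← hmat, Matrix.mul_assoc, Matrix.mul_nonsing_inv G hGunit, Matrix.mul_one]
    have h2 : Mᵀ.trace = -(M.trace) := by
      rw [h1, Matrix.neg_mul, Matrix.trace_neg, Matrix.mul_assoc, Matrix.trace_mul_comm,
        Matrix.mul_assoc, Matrix.nonsing_inv_mul G hGunit, Matrix.mul_one]
    have h3 : Mᵀ.trace = M.trace := Matrix.trace_transpose M
    linarith [h2, h3]
  have htrD : LinearMap.trace ℝ V Dop = 0 := by
    rw [LinearMap.trace_eq_matrix_trace ℝ b Dop, ← hM]
    exact htrM
  -- conclusion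
  have hE1D : E1 = Dop + α • LinearMap.id := by
    show E1 = E1 - α • LinearMap.id + α • LinearMap.id
    abel
  have h := congrArg (LinearMap.trace ℝ V) hE1D
  rw [htrE1, map_add, _root_.map_smul, LinearMap.trace_id, htrD, zero_add, smul_eq_mul] at h
  have hn0 : (n : ℝ) ≠ 0 := Nat.cast_ne_zero.mpr hn.ne'
  have hprod : α * (n : ℝ) = 0 := h.symm
  rcases mul_eq_zero.mp hprod with h' | h'
  · exact h'
  · exact absurd h' hn0
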